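/- arXiv:1608.02283 — 3 statements merged into one kernel-verified Lean document; each statement's English description precedes it below -/
import Mathlib

section
/- Let a ∈ ℝ, let U ⊆ ℝ³ be open, and let r : U → ℝ be a differentiable function with r > 0 satisfying (x² + y²)/(r² + a²) + z²/r² = 1 at every point (x,y,z) ∈ U. Define the vector field L : U → ℝ³ by L(x,y,z) = ((r x + a y)/(r² + a²), (r y − a x)/(r² + a²), z/r). Then L satisfies the flat-space geodesic equation Σ_{i=1}^{3} L_i ∂_i L_j = 0 on U for each j ∈ {1,2,3} (equivalently, ℓ^β ∂_β ℓ^α = 0 for the time-independent Kerr–Schild null vector ℓ). -/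
open ContinuousLinearMap in
lemma quot_fderiv {E : Type*} [NormedAddCommGroup E] [NormedSpace ℝ E]
    {f g : E → ℝ} {f' g' : E →L[ℝ] ℝ} {p : E}
    (hf : HasFDerivAt f f' p) (hg : HasFDerivAt g g' p) (h : g p ≠ 0) :
    HasFDerivAt (fun q => f q / g q)
      ((g p)⁻¹ • f' + (-(f p) / (g p)^2) • g') p := by
  have hinv : HasFDerivAt (fun q => (g q)⁻¹) ((-((g p)^2)⁻¹) • g') p := by
    have h2 := (hasFDerivAt_inv h).comp p hg
    convert! h2 using 1
    ext v
    simp [ContinuousLinearMap.smulRight_apply]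
    ring
  have h3 := hf.mul hinv
  have hfun : (fun q => f q / g q) = fun q => f q * (g q)⁻¹ := by
    funext q; rw [div_eq_mul_inv]
  rw [hfun]
  convert! h3 using 1
  ext v
  simp
  ring

set_option maxHeartbeats 1000000 in
/-- Let `a ∈ ℝ`, `U ⊆ ℝ³` open, and `r : U → ℝ` a differentiable
function with `r > 0` satisfying `(x² + y²)/(r² + a²) + z²/r² = 1` on `U`.  Define
`L = ((rx+ay)/(r²+a²), (ry−ax)/(r²+a²), z/r)`.  Then `L` satisfies the flat-space
geodesic equation `Σᵢ Lᵢ ∂ᵢ Lⱼ = 0` on `U` for each `j`. -/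
theorem kerr_schild_null_vector_geodesic (a : ℝ) (U : Set (Fin 3 → ℝ)) (hU : IsOpen U)
    (r : (Fin 3 → ℝ) → ℝ)
    (hdiff : ∀ p ∈ U, DifferentiableAt ℝ r p)
    (hpos : ∀ p ∈ U, 0 < r p)
    (heq : ∀ p ∈ U,
      ((p 0) ^ 2 + (p 1) ^ 2) / ((r p) ^ 2 + a ^ 2) + (p 2) ^ 2 / (r p) ^ 2 = 1)
    (L : (Fin 3 → ℝ) → Fin 3 → ℝ)
    (hL : ∀ p, L p = ![(r p * p 0 + a * p 1) / ((r p) ^ 2 + a ^ 2),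
                       (r p * p 1 - a * p 0) / ((r p) ^ 2 + a ^ 2),
                       p 2 / r p]) :
    ∀ p ∈ U, ∀ j : Fin 3,
      ∑ i : Fin 3, L p i * fderiv ℝ (fun q => L q j) p (Pi.single i 1) = 0 := by
  intro p hp j
  have hρ : 0 < r p := hpos p hp
  have hρ0 : r p ≠ 0 := ne_of_gt hρ
  have hSig : 0 < r p ^ 2 + a ^ 2 := by positivity
  have hSig0 : r p ^ 2 + a ^ 2 ≠ 0 := ne_of_gt hSig
  have hρ20 : r p ^ 2 ≠ 0 := pow_ne_zero 2 hρ0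
  set dr := fderiv ℝ r p with hdrdef
  have hr : HasFDerivAt r dr p := (hdiff p hp).hasFDerivAt
  set pr : Fin 3 → (Fin 3 → ℝ) →L[ℝ] ℝ := fun i => ContinuousLinearMap.proj i with hprdef
  have h0 : HasFDerivAt (fun q : Fin 3 → ℝ => q 0) (pr 0) p := (pr 0).hasFDerivAt
  have h1 : HasFDerivAt (fun q : Fin 3 → ℝ => q 1) (pr 1) p := (pr 1).hasFDerivAt
  have h2 : HasFDerivAt (fun q : Fin 3 → ℝ => q 2) (pr 2) p := (pr 2).hasFDerivAt
  -- r^2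
  have hr2 : HasFDerivAt (fun q => (r q)^2) ((2 * r p) • dr) p := by
    have := hr.mul hr
    convert! this using 1
    · funext q; simp [sq]
    · ext v; simp; ring
  -- Σ = r^2 + a^2
  have hS : HasFDerivAt (fun q => (r q)^2 + a^2) ((2 * r p) • dr) p := hr2.add_const (a^2)
  -- sum reduction
  have hsum : ∀ (T : (Fin 3 → ℝ) →L[ℝ] ℝ), ∑ i : Fin 3, L p i * T (Pi.single i 1) = T (L p) := by
    intro T
    have h : ∀ i : Fin 3, L p i * T (Pi.single i 1) = T (Pi.single i (L p i)) := by
      intro i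
      have : (Pi.single i (L p i) : Fin 3 → ℝ) = (L p i) • (Pi.single i 1 : Fin 3 → ℝ) := by
        rw [← Pi.single_smul]; norm_num
      rw [this, map_smul, smul_eq_mul]
    simp_rw [h, ← map_sum, Finset.univ_sum_single]
  -- constraint derivative : dr (L p) = 1
  have hN1 : HasFDerivAt (fun q : Fin 3 → ℝ => q 0 ^ 2 + q 1 ^ 2)
      ((2 * p 0) • (pr 0) + (2 * p 1) • (pr 1)) p := by
    have := (h0.mul h0).add (h1.mul h1)
    convert! this using 1
    · funext q; simp [sq]
    · ext v; simp; ring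
  have hN2 : HasFDerivAt (fun q : Fin 3 → ℝ => q 2 ^ 2)
      ((2 * p 2) • (pr 2)) p := by
    have := h2.mul h2
    convert! this using 1
    · funext q; simp [sq]
    · ext v; simp; ring
  have hG := (quot_fderiv hN1 hS hSig0).add (quot_fderiv hN2 hr2 hρ20)
  have hGzero : fderiv ℝ (fun q : Fin 3 → ℝ =>
      (q 0 ^ 2 + q 1 ^ 2) / ((r q)^2 + a^2) + q 2 ^ 2 / (r q)^2) p = 0 := by
    have hev : (fun q : Fin 3 → ℝ =>
        (q 0 ^ 2 + q 1 ^ 2) / ((r q)^2 + a^2) + q 2 ^ 2 / (r q)^2) =ᶠ[nhds p]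
        (fun _ => (1:ℝ)) :=
      Filter.eventuallyEq_of_mem (hU.mem_nhds hp) (fun q hq => heq q hq)
    rw [hev.fderiv_eq, fderiv_fun_const]
    rfl
  have hDG := hG.fderiv
  erw [hGzero] at hDG
  have heval := congrArg (fun (T : (Fin 3 → ℝ) →L[ℝ] ℝ) => T (L p)) hDG
  simp only [ContinuousLinearMap.add_apply, ContinuousLinearMap.smul_apply,
    ContinuousLinearMap.proj_apply, ContinuousLinearMap.zero_apply, smul_eq_mul,
    hprdef] at heval
  -- coordinates of L p
  have hL0 : L p 0 = (r p * p 0 + a * p 1) / ((r p) ^ 2 + a ^ 2) := by rw [hL]; simp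
  have hL1 : L p 1 = (r p * p 1 - a * p 0) / ((r p) ^ 2 + a ^ 2) := by rw [hL]; simp
  have hL2 : L p 2 = p 2 / r p := by rw [hL]; simp
  rw [hL0, hL1, hL2] at heval
  field_simp at heval
  -- key factorization
  have hkey : (1 - dr (L p)) * (2 * r p ^ 4 * (r p ^ 2 + a ^ 2) ^ 2 *
      (r p ^ 4 * (p 0 ^ 2 + p 1 ^ 2) + p 2 ^ 2 * (r p ^ 2 + a ^ 2) ^ 2)) = 0 := by
    linear_combination (-(r p ^ 4 * (r p ^ 2 + a ^ 2) ^ 2)) * heval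
  have hcon := heq p hp
  have hP : 0 < r p ^ 4 * (p 0 ^ 2 + p 1 ^ 2) + p 2 ^ 2 * (r p ^ 2 + a ^ 2) ^ 2 := by
    by_cases hz : p 2 = 0
    · have hxy : 0 < p 0 ^ 2 + p 1 ^ 2 := by
        rcases lt_or_eq_of_le (by positivity : (0:ℝ) ≤ p 0 ^ 2 + p 1 ^ 2) with h | h
        · exact h
        · exfalso; rw [← h, hz] at hcon; simp at hcon
      nlinarith [mul_pos (pow_pos hρ 4) hxy, sq_nonneg (p 2 * (r p ^ 2 + a ^ 2))]
    · have hz2 : 0 < p 2 ^ 2 := by positivity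
      nlinarith [mul_pos hz2 (pow_pos hSig 2), mul_nonneg (le_of_lt (pow_pos hρ 4))
        (by positivity : (0:ℝ) ≤ p 0 ^ 2 + p 1 ^ 2)]
  have hfac : 0 < 2 * r p ^ 4 * (r p ^ 2 + a ^ 2) ^ 2 *
      (r p ^ 4 * (p 0 ^ 2 + p 1 ^ 2) + p 2 ^ 2 * (r p ^ 2 + a ^ 2) ^ 2) := by positivity
  have ht : dr (L p) = 1 := by
    rcases mul_eq_zero.mp hkey with h | h
    · linarith
    · exact absurd h (ne_of_gt hfac)
  -- now the three components
  fin_cases j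
  · have hD0 := (hr.mul h0).add (h1.const_mul a)
    have hQ0 := quot_fderiv hD0 hS hSig0
    have hfun0 : (fun q => L q (0 : Fin 3)) =
        fun q => (r q * q 0 + a * q 1) / ((r q) ^ 2 + a ^ 2) := by
      funext q; rw [hL]; simp
    rw [show ((⟨0, by norm_num⟩ : Fin 3)) = (0 : Fin 3) from rfl, hfun0]
    erw [hQ0.fderiv, hsum]
    simp only [ContinuousLinearMap.add_apply, ContinuousLinearMap.smul_apply,
      ContinuousLinearMap.proj_apply, smul_eq_mul, hprdef, Pi.add_apply, Pi.mul_apply]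
    rw [hL0, hL1, ht]
    field_simp
    ring
  · have hD1 := (hr.mul h1).sub (h0.const_mul a)
    have hQ1 := quot_fderiv hD1 hS hSig0
    have hfun1 : (fun q => L q (1 : Fin 3)) =
        fun q => (r q * q 1 - a * q 0) / ((r q) ^ 2 + a ^ 2) := by
      funext q; rw [hL]; simp
    rw [show ((⟨1, by norm_num⟩ : Fin 3)) = (1 : Fin 3) from rfl, hfun1]
    erw [hQ1.fderiv, hsum]
    simp only [ContinuousLinearMap.add_apply, ContinuousLinearMap.sub_apply,
      ContinuousLinearMap.smul_apply, ContinuousLinearMap.proj_apply, smul_eq_mul, hprdef, Pi.sub_apply, Pi.mul_apply]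
    rw [hL0, hL1, ht]
    field_simp
    ring
  · have hQ2 := quot_fderiv h2 hr hρ0
    have hfun2 : (fun q => L q (2 : Fin 3)) = fun q => q 2 / r q := by
      funext q; rw [hL]; simp
    rw [show ((⟨2, by norm_num⟩ : Fin 3)) = (2 : Fin 3) from rfl, hfun2]
    erw [hQ2.fderiv, hsum]
    simp only [ContinuousLinearMap.add_apply, ContinuousLinearMap.smul_apply,
      ContinuousLinearMap.proj_apply, smul_eq_mul, hprdef]
    rw [hL2, ht]
    field_simp
    ring
end

section
/- Let a, M ∈ ℝ, let U ⊆ ℝ³ be open, and let r : U → ℝ be a twice continuously differentiable function with r > 0 satisfying (x² + y²)/(r² + a²) + z²/r² = 1 at every point (x,y,z) ∈ U. Then the function H : U → ℝ defined by H = M r³/(r⁴ + a² z²) is harmonic on U, i.e. ∂²_x H + ∂²_y H + ∂²_z H = 0 (equivalently, the time-independent Kerr–Schild potential H satisfies the background wave equation η^{αβ} ∂_α ∂_β H = 0). -/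
open Filter Topology

private lemma line_hasDerivAt (x v : Fin 3 → ℝ) :
    HasDerivAt (fun t : ℝ => x + t • v) v 0 := by
  simpa using ((hasDerivAt_id (0 : ℝ)).smul_const v).const_add x

private lemma dirDeriv {f : (Fin 3 → ℝ) → ℝ} {x : Fin 3 → ℝ} (v : Fin 3 → ℝ)
    (hf : DifferentiableAt ℝ f x) :
    HasDerivAt (fun t : ℝ => f (x + t • v)) (fderiv ℝ f x v) 0 := by
  have h := hf.hasFDerivAt.comp_hasDerivAt_of_eq 0 (line_hasDerivAt x v) (by simp)
  exact h

private lemma coord_hasDerivAt (x v : Fin 3 → ℝ) (j : Fin 3) :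
    HasDerivAt (fun t : ℝ => (x + t • v) j) (v j) 0 := by
  simpa [Pi.add_apply, Pi.smul_apply, smul_eq_mul] using
    (hasDerivAt_mul_const (v j)).const_add (x j)

private lemma grad_formula (a : ℝ) {U : Set (Fin 3 → ℝ)} (hU : IsOpen U)
    {r : (Fin 3 → ℝ) → ℝ} (hreg : ContDiffOn ℝ 2 r U)
    (hpos : ∀ p ∈ U, 0 < r p)
    (heq : ∀ p ∈ U,
      ((p 0) ^ 2 + (p 1) ^ 2) / ((r p) ^ 2 + a ^ 2) + (p 2) ^ 2 / (r p) ^ 2 = 1)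
    {q : Fin 3 → ℝ} (hq : q ∈ U) (v : Fin 3 → ℝ) :
    fderiv ℝ r q v = ((r q) ^ 3 * (q 0 * v 0 + q 1 * v 1)
      + (r q) * ((r q) ^ 2 + a ^ 2) * (q 2 * v 2)) / ((r q) ^ 4 + a ^ 2 * (q 2) ^ 2) := by
  have hR : 0 < r q := hpos q hq
  have hS : (0:ℝ) < (r q) ^ 4 + a ^ 2 * (q 2) ^ 2 := by positivity
  have hdr : DifferentiableAt ℝ r q :=
    (hreg.differentiableOn (by norm_num)).differentiableAt (hU.mem_nhds hq)
  have hC : ∀ p ∈ U, ((p 0) ^ 2 + (p 1) ^ 2) * (r p) ^ 2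
      + (p 2) ^ 2 * ((r p) ^ 2 + a ^ 2) - (r p) ^ 2 * ((r p) ^ 2 + a ^ 2) = 0 := by
    intro p hp
    have h1 := heq p hp
    have hRp : 0 < r p := hpos p hp
    have h2 : (r p) ^ 2 + a ^ 2 ≠ 0 := by positivity
    have h3 : (r p) ^ 2 ≠ 0 := by positivity
    field_simp at h1
    nlinarith [h1]
  have hρ : HasDerivAt (fun t : ℝ => r (q + t • v)) (fderiv ℝ r q v) 0 := dirDeriv v hdr
  have hψd := ((((coord_hasDerivAt q v 0).pow 2).add ((coord_hasDerivAt q v 1).pow 2)).mul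
      (hρ.pow 2)).add (((coord_hasDerivAt q v 2).pow 2).mul ((hρ.pow 2).add_const (a ^ 2)))
      |>.sub ((hρ.pow 2).mul ((hρ.pow 2).add_const (a ^ 2)))
  have hψ0 : HasDerivAt (fun t : ℝ =>
      (((q + t • v) 0) ^ 2 + ((q + t • v) 1) ^ 2) * (r (q + t • v)) ^ 2
      + ((q + t • v) 2) ^ 2 * ((r (q + t • v)) ^ 2 + a ^ 2)
      - (r (q + t • v)) ^ 2 * ((r (q + t • v)) ^ 2 + a ^ 2)) 0 0 := by
    have hcont : Continuous fun t : ℝ => q + t • v := by continuity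
    have hmem : ∀ᶠ t in 𝓝 (0:ℝ), q + t • v ∈ U := by
      have := hcont.continuousAt (x := 0) (hU.mem_nhds (by simpa using hq))
      exact this
    refine (hasDerivAt_const 0 0).congr_of_eventuallyEq ?_
    filter_upwards [hmem] with t ht using hC _ ht
  have hkey := hψ0.unique hψd
  simp only [zero_smul, add_zero, Pi.pow_apply, Pi.add_apply, Pi.mul_apply, Pi.sub_apply, Pi.div_apply, Pi.zero_apply, Nat.cast_ofNat, Nat.reduceSub] at hkey
  have hCq := hC q hq
  rw [eq_div_iff (ne_of_gt hS)]
  linear_combination ((r q) / 2) * hkey + (fderiv ℝ r q v) * hCq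

private lemma dH_formula (a M : ℝ) {U : Set (Fin 3 → ℝ)} (hU : IsOpen U)
    {r : (Fin 3 → ℝ) → ℝ} (hreg : ContDiffOn ℝ 2 r U)
    (hpos : ∀ p ∈ U, 0 < r p)
    (heq : ∀ p ∈ U,
      ((p 0) ^ 2 + (p 1) ^ 2) / ((r p) ^ 2 + a ^ 2) + (p 2) ^ 2 / (r p) ^ 2 = 1)
    {H : (Fin 3 → ℝ) → ℝ}
    (hH : ∀ p, H p = M * (r p) ^ 3 / ((r p) ^ 4 + a ^ 2 * (p 2) ^ 2))
    {q : Fin 3 → ℝ} (hq : q ∈ U) (v : Fin 3 → ℝ) :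
    fderiv ℝ H q v = (M * (q 0 * v 0 + q 1 * v 1) * (r q) ^ 5 * (3 * a ^ 2 * (q 2) ^ 2 - (r q) ^ 4)
      + M * (q 2 * v 2) * (r q) ^ 3 * (3 * a ^ 2 * (q 2) ^ 2 * (r q) ^ 2 + a ^ 4 * (q 2) ^ 2
        - (r q) ^ 6 - 3 * a ^ 2 * (r q) ^ 4))
      / ((r q) ^ 4 + a ^ 2 * (q 2) ^ 2) ^ 3 := by
  have hHfun : H = fun p => M * (r p) ^ 3 / ((r p) ^ 4 + a ^ 2 * (p 2) ^ 2) := funext hH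
  have hR : 0 < r q := hpos q hq
  have hS : (0:ℝ) < (r q) ^ 4 + a ^ 2 * (q 2) ^ 2 := by positivity
  have hdr : DifferentiableAt ℝ r q :=
    (hreg.differentiableOn (by norm_num)).differentiableAt (hU.mem_nhds hq)
  have hd2 : DifferentiableAt ℝ (fun p : Fin 3 → ℝ => p 2) q := differentiableAt_apply 2 q
  have hdiff : DifferentiableAt ℝ H q := by
    rw [hHfun]
    simp only [div_eq_mul_inv]
    exact ((hdr.pow 3).const_mul M).mul
      (((hdr.pow 4).add ((hd2.pow 2).const_mul (a ^ 2))).inv (ne_of_gt hS))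
  have h1 : HasDerivAt (fun t : ℝ => H (q + t • v)) (fderiv ℝ H q v) 0 := dirDeriv v hdiff
  rw [hHfun] at h1
  have hρ : HasDerivAt (fun t : ℝ => r (q + t • v)) (fderiv ℝ r q v) 0 := dirDeriv v hdr
  have h2 := ((hρ.pow 3).const_mul M).div
      ((hρ.pow 4).add (((coord_hasDerivAt q v 2).pow 2).const_mul (a ^ 2)))
      (by simpa using ne_of_gt hS)
  have hkey := h1.unique h2
  simp only [zero_smul, add_zero, Pi.pow_apply, Pi.add_apply, Pi.mul_apply, Pi.sub_apply, Pi.div_apply, Pi.zero_apply, Nat.cast_ofNat, Nat.reduceSub] at hkey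
  rw [hHfun]
  rw [hkey, grad_formula a hU hreg hpos heq hq v]
  field_simp
  ring

set_option maxHeartbeats 4000000 in
private lemma d2H_formula (a M : ℝ) {U : Set (Fin 3 → ℝ)} (hU : IsOpen U)
    {r : (Fin 3 → ℝ) → ℝ} (hreg : ContDiffOn ℝ 2 r U)
    (hpos : ∀ p ∈ U, 0 < r p)
    (heq : ∀ p ∈ U,
      ((p 0) ^ 2 + (p 1) ^ 2) / ((r p) ^ 2 + a ^ 2) + (p 2) ^ 2 / (r p) ^ 2 = 1)
    {H : (Fin 3 → ℝ) → ℝ}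
    (hH : ∀ p, H p = M * (r p) ^ 3 / ((r p) ^ 4 + a ^ 2 * (p 2) ^ 2))
    {p : Fin 3 → ℝ} (hp : p ∈ U) (v : Fin 3 → ℝ) :
    fderiv ℝ (fun q => fderiv ℝ H q v) p v =
      M * ((15)*(p 0)^2*(p 2)^4*(r p)^7*(a)^4*(v 0)^2 + (-30)*(p 0)^2*(p 2)^2*(r p)^11*(a)^2*(v 0)^2 + (3)*(p 0)^2*(r p)^15*(v 0)^2 + (30)*(p 0)*(p 1)*(p 2)^4*(r p)^7*(a)^4*(v 0)*(v 1) + (-60)*(p 0)*(p 1)*(p 2)^2*(r p)^11*(a)^2*(v 0)*(v 1) + (6)*(p 0)*(p 1)*(r p)^15*(v 0)*(v 1) + (30)*(p 0)*(p 2)^5*(r p)^7*(a)^4*(v 0)*(v 2) + (6)*(p 0)*(p 2)^5*(r p)^5*(a)^6*(v 0)*(v 2) + (-60)*(p 0)*(p 2)^3*(r p)^11*(a)^2*(v 0)*(v 2) + (-60)*(p 0)*(p 2)^3*(r p)^9*(a)^4*(v 0)*(v 2) + (6)*(p 0)*(p 2)*(r p)^15*(v 0)*(v 2) + (30)*(p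 0)*(p 2)*(r p)^13*(a)^2*(v 0)*(v 2) + (15)*(p 1)^2*(p 2)^4*(r p)^7*(a)^4*(v 1)^2 + (-30)*(p 1)^2*(p 2)^2*(r p)^11*(a)^2*(v 1)^2 + (3)*(p 1)^2*(r p)^15*(v 1)^2 + (30)*(p 1)*(p 2)^5*(r p)^7*(a)^4*(v 1)*(v 2) + (6)*(p 1)*(p 2)^5*(r p)^5*(a)^6*(v 1)*(v 2) + (-60)*(p 1)*(p 2)^3*(r p)^11*(a)^2*(v 1)*(v 2) + (-60)*(p 1)*(p 2)^3*(r p)^9*(a)^4*(v 1)*(v 2) + (6)*(p 1)*(p 2)*(r p)^15*(v 1)*(v 2) + (30)*(p 1)*(p 2)*(r p)^13*(a)^2*(v 1)*(v 2) + (15)*(p 2)^6*(r p)^7*(a)^4*(v 2)^2 + (3)*(p 2)^6*(r p)^5*(a)^6*(v 0)^2 + (3)*(p 2)^6*(r p)^5*(a)^6*(v 1)^2 + (9)*(p 2)^6*(r p)^5*(a)^6*(v 2)^2 + (-30)*(p 2)^4*(r p)^11*(a)^2*(v 2)^2 + (5)*(p 2)^4*(r p)^9*(a)^4*(v 0)^2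 + (5)*(p 2)^4*(r p)^9*(a)^4*(v 1)^2 + (-55)*(p 2)^4*(r p)^9*(a)^4*(v 2)^2 + (-15)*(p 2)^4*(r p)^7*(a)^6*(v 2)^2 + (3)*(p 2)^2*(r p)^15*(v 2)^2 + (p 2)^2*(r p)^13*(a)^2*(v 0)^2 + (p 2)^2*(r p)^13*(a)^2*(v 1)^2 + (31)*(p 2)^2*(r p)^13*(a)^2*(v 2)^2 + (30)*(p 2)^2*(r p)^11*(a)^4*(v 2)^2 + (-1)*(r p)^17*(v 0)^2 + (-1)*(r p)^17*(v 1)^2 + (-1)*(r p)^17*(v 2)^2 + (-3)*(r p)^15*(a)^2*(v 2)^2)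
      / ((r p) ^ 4 + a ^ 2 * (p 2) ^ 2) ^ 5 := by
  have hR : 0 < r p := hpos p hp
  have hS : (0:ℝ) < (r p) ^ 4 + a ^ 2 * (p 2) ^ 2 := by positivity
  have hdr : DifferentiableAt ℝ r p :=
    (hreg.differentiableOn (by norm_num)).differentiableAt (hU.mem_nhds hp)
  have hd0 : DifferentiableAt ℝ (fun q : Fin 3 → ℝ => q 0) p := differentiableAt_apply 0 p
  have hd1 : DifferentiableAt ℝ (fun q : Fin 3 → ℝ => q 1) p := differentiableAt_apply 1 p
  have hd2 : DifferentiableAt ℝ (fun q : Fin 3 → ℝ => q 2) p := differentiableAt_apply 2 p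
  have hev : (fun q => fderiv ℝ H q v) =ᶠ[𝓝 p] fun q =>
      (M * (q 0 * v 0 + q 1 * v 1) * (r q) ^ 5 * (3 * a ^ 2 * (q 2) ^ 2 - (r q) ^ 4)
      + M * (q 2 * v 2) * (r q) ^ 3 * (3 * a ^ 2 * (q 2) ^ 2 * (r q) ^ 2 + a ^ 4 * (q 2) ^ 2
        - (r q) ^ 6 - 3 * a ^ 2 * (r q) ^ 4))
      / ((r q) ^ 4 + a ^ 2 * (q 2) ^ 2) ^ 3 := by
    filter_upwards [hU.mem_nhds hp] with q hq using dH_formula a M hU hreg hpos heq hH hq v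
  rw [hev.fderiv_eq]
  have hG : DifferentiableAt ℝ (fun q : Fin 3 → ℝ =>
      (M * (q 0 * v 0 + q 1 * v 1) * (r q) ^ 5 * (3 * a ^ 2 * (q 2) ^ 2 - (r q) ^ 4)
      + M * (q 2 * v 2) * (r q) ^ 3 * (3 * a ^ 2 * (q 2) ^ 2 * (r q) ^ 2 + a ^ 4 * (q 2) ^ 2
        - (r q) ^ 6 - 3 * a ^ 2 * (r q) ^ 4))
      / ((r q) ^ 4 + a ^ 2 * (q 2) ^ 2) ^ 3) p := by
    have hnum : DifferentiableAt ℝ (fun q : Fin 3 → ℝ =>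
        M * (q 0 * v 0 + q 1 * v 1) * (r q) ^ 5 * (3 * a ^ 2 * (q 2) ^ 2 - (r q) ^ 4)
        + M * (q 2 * v 2) * (r q) ^ 3 * (3 * a ^ 2 * (q 2) ^ 2 * (r q) ^ 2 + a ^ 4 * (q 2) ^ 2
          - (r q) ^ 6 - 3 * a ^ 2 * (r q) ^ 4)) p :=
      ((((((hd0.mul_const (v 0)).add (hd1.mul_const (v 1))).const_mul M).mul (hdr.pow 5)).mul (((hd2.pow 2).const_mul (3 * a ^ 2)).sub (hdr.pow 4))).add ((((hd2.mul_const (v 2)).const_mul M).mul (hdr.pow 3)).mul ((((((hd2.pow 2).const_mul (3 * a ^ 2)).mul (hdr.pow 2)).add ((hd2.pow 2).const_mul (a ^ 4))).sub (hdr.pow 6)).sub ((hdr.pow 4).const_mul (3 * a ^ 2)))))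
    have hden : DifferentiableAt ℝ (fun q : Fin 3 → ℝ =>
        ((r q) ^ 4 + a ^ 2 * (q 2) ^ 2) ^ 3) p :=
      ((hdr.pow 4).add ((hd2.pow 2).const_mul (a ^ 2))).pow 3
    have hrw : (fun q : Fin 3 → ℝ =>
        (M * (q 0 * v 0 + q 1 * v 1) * (r q) ^ 5 * (3 * a ^ 2 * (q 2) ^ 2 - (r q) ^ 4)
      + M * (q 2 * v 2) * (r q) ^ 3 * (3 * a ^ 2 * (q 2) ^ 2 * (r q) ^ 2 + a ^ 4 * (q 2) ^ 2
        - (r q) ^ 6 - 3 * a ^ 2 * (r q) ^ 4))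
      / ((r q) ^ 4 + a ^ 2 * (q 2) ^ 2) ^ 3) = fun q : Fin 3 → ℝ =>
        (M * (q 0 * v 0 + q 1 * v 1) * (r q) ^ 5 * (3 * a ^ 2 * (q 2) ^ 2 - (r q) ^ 4)
        + M * (q 2 * v 2) * (r q) ^ 3 * (3 * a ^ 2 * (q 2) ^ 2 * (r q) ^ 2 + a ^ 4 * (q 2) ^ 2
          - (r q) ^ 6 - 3 * a ^ 2 * (r q) ^ 4))
        * (((r q) ^ 4 + a ^ 2 * (q 2) ^ 2) ^ 3)⁻¹ := by
      funext q; rw [div_eq_mul_inv]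
    rw [hrw]
    exact hnum.mul (hden.inv (pow_ne_zero 3 (ne_of_gt hS)))
  have hρ : HasDerivAt (fun t : ℝ => r (p + t • v)) (fderiv ℝ r p v) 0 := dirDeriv v hdr
  have hc0 := coord_hasDerivAt p v 0
  have hc1 := coord_hasDerivAt p v 1
  have hc2 := coord_hasDerivAt p v 2
  have h2 := (((((((hc0.mul_const (v 0)).add (hc1.mul_const (v 1))).const_mul M).mul (hρ.pow 5)).mul (((hc2.pow 2).const_mul (3 * a ^ 2)).sub (hρ.pow 4))).add ((((hc2.mul_const (v 2)).const_mul M).mul (hρ.pow 3)).mul ((((((hc2.pow 2).const_mul (3 * a ^ 2)).mul (hρ.pow 2)).add ((hc2.pow 2).const_mul (a ^ 4))).sub (hρ.pow 6)).sub ((hρ.pow 4).const_mul (3 * a ^ 2))))).div (((hρ.pow 4).add ((hc2.pow 2).const_mul (a ^ 2))).pow 3)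
      (by simpa using pow_ne_zero 3 (ne_of_gt hS)))
  have h1 := dirDeriv (f := fun q : Fin 3 → ℝ =>
      (M * (q 0 * v 0 + q 1 * v 1) * (r q) ^ 5 * (3 * a ^ 2 * (q 2) ^ 2 - (r q) ^ 4)
      + M * (q 2 * v 2) * (r q) ^ 3 * (3 * a ^ 2 * (q 2) ^ 2 * (r q) ^ 2 + a ^ 4 * (q 2) ^ 2
        - (r q) ^ 6 - 3 * a ^ 2 * (r q) ^ 4))
      / ((r q) ^ 4 + a ^ 2 * (q 2) ^ 2) ^ 3) v hG
  have hkey := h1.unique h2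
  simp only [zero_smul, add_zero, Pi.pow_apply, Pi.add_apply, Pi.mul_apply, Pi.sub_apply, Pi.div_apply, Pi.zero_apply, Nat.cast_ofNat, Nat.reduceSub] at hkey
  rw [hkey, grad_formula a hU hreg hpos heq hp v]
  field_simp
  ring

/-- Let `a, M ∈ ℝ`, `U ⊆ ℝ³` open, and `r : U → ℝ` a twice
continuously differentiable function with `r > 0` satisfying the Boyer–Lindquist
relation on `U`.  Then `H = M r³/(r⁴ + a² z²)` is harmonic on `U`:
`∂²ₓH + ∂²ᵧH + ∂²_zH = 0` (the time-independent background wave equation). -/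
theorem kerr_schild_potential_harmonic (a M : ℝ) (U : Set (Fin 3 → ℝ)) (hU : IsOpen U)
    (r : (Fin 3 → ℝ) → ℝ)
    (hreg : ContDiffOn ℝ 2 r U)
    (hpos : ∀ p ∈ U, 0 < r p)
    (heq : ∀ p ∈ U,
      ((p 0) ^ 2 + (p 1) ^ 2) / ((r p) ^ 2 + a ^ 2) + (p 2) ^ 2 / (r p) ^ 2 = 1)
    (H : (Fin 3 → ℝ) → ℝ)
    (hH : ∀ p, H p = M * (r p) ^ 3 / ((r p) ^ 4 + a ^ 2 * (p 2) ^ 2)) :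
    ∀ p ∈ U, ∑ i : Fin 3,
      fderiv ℝ (fun q => fderiv ℝ H q (Pi.single i 1)) p (Pi.single i 1) = 0 := by
  intro p hp
  have hR : 0 < r p := hpos p hp
  have hS : (0:ℝ) < (r p) ^ 4 + a ^ 2 * (p 2) ^ 2 := by positivity
  have hCq : ((p 0) ^ 2 + (p 1) ^ 2) * (r p) ^ 2
      + (p 2) ^ 2 * ((r p) ^ 2 + a ^ 2) - (r p) ^ 2 * ((r p) ^ 2 + a ^ 2) = 0 := by
    have h1 := heq p hp
    have h2 : (r p) ^ 2 + a ^ 2 ≠ 0 := by positivity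
    have h3 : (r p) ^ 2 ≠ 0 := by positivity
    field_simp at h1
    nlinarith [h1]
  have h0 := d2H_formula a M hU hreg hpos heq hH hp (Pi.single 0 1)
  have h1 := d2H_formula a M hU hreg hpos heq hH hp (Pi.single 1 1)
  have h2 := d2H_formula a M hU hreg hpos heq hH hp (Pi.single 2 1)
  simp only [Pi.single_eq_same,
    Pi.single_eq_of_ne (show (1:Fin 3) ≠ 0 by decide),
    Pi.single_eq_of_ne (show (2:Fin 3) ≠ 0 by decide),
    Pi.single_eq_of_ne (show (0:Fin 3) ≠ 1 by decide),
    Pi.single_eq_of_ne (show (2:Fin 3) ≠ 1 by decide),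
    Pi.single_eq_of_ne (show (0:Fin 3) ≠ 2 by decide),
    Pi.single_eq_of_ne (show (1:Fin 3) ≠ 2 by decide)] at h0 h1 h2
  norm_num at h0 h1 h2
  rw [Fin.sum_univ_three, h0, h1, h2, ← add_div, ← add_div,
    div_eq_zero_iff]
  left
  linear_combination (M * (3 * (r p) ^ 13 - 30 * a ^ 2 * (p 2) ^ 2 * (r p) ^ 9
    + 15 * a ^ 4 * (p 2) ^ 4 * (r p) ^ 5)) * hCq
end

section
/- Let u : ℝ³ → ℝ be continuously differentiable and suppose there are constants C, R₀ > 0 such that for all |p| ≥ R₀: |u(p)| ≤ C |p|^{−2}, |∇u(p)| ≤ C |p|^{−3}, |u(p) − u(−p)| ≤ C |p|^{−3}, and |∇u(p) + ∇u(−p)| ≤ C |p|^{−4}. Define Δh_{ij} = δ_{i3} δ_{j3} u, and for each l ∈ {1,2,3} the vector field W^{(l)}_j(p) = p_l ( Σ_k ∂_k Δh_{kj}(p) − ∂_j (Σ_k Δh_{kk})(p) ) − ( Δh_{lj}(p) − (Σ_k Δh_{kk}(p)) δ_{lj} ). Then the center-of-mass deviation flux vanishes in the limit: lim_{A→∞}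 (1/16π) Φ_□(W^{(l)}, A) = 0 for each l ∈ {1,2,3}. -/
open MeasureTheory Filter intervalIntegral

/-- The Euclidean norm of a point of `ℝ³`. -/
noncomputable def euclNorm (p : Fin 3 → ℝ) : ℝ :=
  Real.sqrt (p 0 ^ 2 + p 1 ^ 2 + p 2 ^ 2)

/-- The flux of a vector field `W` through the boundary of the cube `[−A,A]³`,
with outward unit normal: the sum of the six face integrals. -/
noncomputable def cubeFlux (W : (Fin 3 → ℝ) → Fin 3 → ℝ) (A : ℝ) : ℝ :=
  (∫ y in (-A)..A, ∫ z in (-A)..A, (W ![A, y, z] 0 - W ![-A, y, z] 0)) +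
  (∫ x in (-A)..A, ∫ z in (-A)..A, (W ![x, A, z] 1 - W ![x, -A, z] 1)) +
  (∫ x in (-A)..A, ∫ y in (-A)..A, (W ![x, y, A] 2 - W ![x, y, -A] 2))


lemma abs_le_euclNorm (v : Fin 3 → ℝ) (i : Fin 3) : |v i| ≤ euclNorm v := by
  have h : v i ^ 2 ≤ v 0 ^ 2 + v 1 ^ 2 + v 2 ^ 2 := by
    fin_cases i <;> simp <;> nlinarith [sq_nonneg (v 0), sq_nonneg (v 1), sq_nonneg (v 2)]
  calc |v i| = Real.sqrt (v i ^ 2) := (Real.sqrt_sq_eq_abs _).symm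
    _ ≤ euclNorm v := Real.sqrt_le_sqrt h

lemma cont_vec3 {f g h : ℝ × ℝ → ℝ} (hf : Continuous f) (hg : Continuous g)
    (hh : Continuous h) : Continuous fun q => (![f q, g q, h q] : Fin 3 → ℝ) := by
  apply continuous_pi
  intro i
  fin_cases i
  · simpa using hf
  · simpa using hg
  · simpa using hh

lemma flux_pair_bound {f g : ℝ → ℝ → ℝ} (hf : Continuous fun q : ℝ × ℝ => f q.1 q.2)
    (hg : Continuous fun q : ℝ × ℝ => g q.1 q.2) {A M : ℝ} (hA : 0 < A)
    (hbound : ∀ y z, |f y z - g (-y) (-z)| ≤ M) :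
    |∫ y in (-A)..A, ∫ z in (-A)..A, (f y z - g y z)| ≤ M * (2 * A) * (2 * A) := by
  have cf : ∀ y, Continuous fun z => f y z := fun y => hf.comp (Continuous.prodMk_right y)
  have cg : ∀ y, Continuous fun z => g y z := fun y => hg.comp (Continuous.prodMk_right y)
  have cg3 : ∀ y, Continuous fun z => g (-y) (-z) := fun y =>
    hg.comp ((continuous_const.prodMk continuous_neg))
  have intA : IntervalIntegrable (fun y => ∫ z in (-A)..A, f y z) volume (-A) A :=
    (intervalIntegral.continuous_parametric_intervalIntegral_of_continuous'
      (f := fun y z => f y z) hf (-A) A).intervalIntegrable _ _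
  have hg2 : Continuous fun q : ℝ × ℝ => g q.1 (-q.2) :=
    hg.comp (continuous_fst.prodMk continuous_snd.neg)
  have intB : IntervalIntegrable (fun y => ∫ z in (-A)..A, g y (-z)) volume (-A) A :=
    (intervalIntegral.continuous_parametric_intervalIntegral_of_continuous'
      (f := fun y z => g y (-z)) hg2 (-A) A).intervalIntegrable _ _
  have hg3 : Continuous fun q : ℝ × ℝ => g (-q.1) (-q.2) :=
    hg.comp (continuous_fst.neg.prodMk continuous_snd.neg)
  have intC : IntervalIntegrable (fun y => ∫ z in (-A)..A, g (-y) (-z)) volume (-A) A :=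
    (intervalIntegral.continuous_parametric_intervalIntegral_of_continuous'
      (f := fun y z => g (-y) (-z)) hg3 (-A) A).intervalIntegrable _ _
  have key : (∫ y in (-A)..A, ∫ z in (-A)..A, (f y z - g y z))
      = ∫ y in (-A)..A, ∫ z in (-A)..A, (f y z - g (-y) (-z)) := by
    calc (∫ y in (-A)..A, ∫ z in (-A)..A, (f y z - g y z))
        = ∫ y in (-A)..A, ((∫ z in (-A)..A, f y z) - ∫ z in (-A)..A, g y (-z)) := by
          apply intervalIntegral.integral_congr
          intro y _
          dsimp only
          rw [intervalIntegral.integral_sub ((cf y).intervalIntegrable _ _)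
            ((cg y).intervalIntegrable _ _)]
          congr 1
          simpa using
            (intervalIntegral.integral_comp_neg (a := -A) (b := A) (fun z => g y z)).symm
      _ = (∫ y in (-A)..A, ∫ z in (-A)..A, f y z)
          - ∫ y in (-A)..A, ∫ z in (-A)..A, g y (-z) :=
          intervalIntegral.integral_sub intA intB
      _ = (∫ y in (-A)..A, ∫ z in (-A)..A, f y z)
          - ∫ y in (-A)..A, ∫ z in (-A)..A, g (-y) (-z) := by
          congr 1
          simpa using (intervalIntegral.integral_comp_neg (a := -A) (b := A)
            (fun y => ∫ z in (-A)..A, g y (-z))).symm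
      _ = ∫ y in (-A)..A, ((∫ z in (-A)..A, f y z) - ∫ z in (-A)..A, g (-y) (-z)) :=
          (intervalIntegral.integral_sub intA intC).symm
      _ = ∫ y in (-A)..A, ∫ z in (-A)..A, (f y z - g (-y) (-z)) := by
          apply intervalIntegral.integral_congr
          intro y _
          exact (intervalIntegral.integral_sub ((cf y).intervalIntegrable _ _)
            ((cg3 y).intervalIntegrable _ _)).symm
  rw [key]
  have h2A : |A - -A| = 2 * A := by rw [abs_of_pos (by linarith)]; ring
  calc |∫ y in (-A)..A, ∫ z in (-A)..A, (f y z - g (-y) (-z))|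
      ≤ (M * (2 * A)) * |A - -A| := by
        rw [← Real.norm_eq_abs]
        apply intervalIntegral.norm_integral_le_of_norm_le_const
        intro y _
        calc ‖∫ z in (-A)..A, (f y z - g (-y) (-z))‖ ≤ M * |A - -A| :=
              intervalIntegral.norm_integral_le_of_norm_le_const fun z _ => by
                rw [Real.norm_eq_abs]; exact hbound y z
          _ = M * (2 * A) := by rw [h2A]
    _ = M * (2 * A) * (2 * A) := by rw [h2A]

/-- Let `u : ℝ³ → ℝ` be continuously differentiable with
`|u(p)| ≤ C|p|^{−2}`, `|∇u(p)| ≤ C|p|^{−3}`, and the Regge–Teitelboim parity decays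
`|u(p) − u(−p)| ≤ C|p|^{−3}`, `|∇u(p) + ∇u(−p)| ≤ C|p|^{−4}` for `|p| ≥ R₀`.
With `Δh_{ij} = δ_{i3}δ_{j3} u` and
`W^{(l)}_j = p_l(Σ_k ∂_k Δh_{kj} − ∂_j Σ_k Δh_{kk}) − (Δh_{lj} − (Σ_k Δh_{kk})δ_{lj})`,
the center-of-mass deviation flux `(1/16π) Φ_□(W^{(l)}, A)` tends to `0` as `A → ∞`,
for each `l`. -/
theorem adm_center_of_mass_deviation_flux_vanishes (C R₀ : ℝ) (hC : 0 < C) (hR₀ : 0 < R₀)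
    (u : (Fin 3 → ℝ) → ℝ) (hu : ContDiff ℝ 1 u)
    (hu0 : ∀ p, R₀ ≤ euclNorm p → |u p| ≤ C / euclNorm p ^ 2)
    (hgrad : ∀ p, R₀ ≤ euclNorm p →
      euclNorm (fun i => fderiv ℝ u p (Pi.single i 1)) ≤ C / euclNorm p ^ 3)
    (huparity : ∀ p, R₀ ≤ euclNorm p → |u p - u (-p)| ≤ C / euclNorm p ^ 3)
    (hgradparity : ∀ p, R₀ ≤ euclNorm p →
      euclNorm (fun i => fderiv ℝ u p (Pi.single i 1) + fderiv ℝ u (-p) (Pi.single i 1))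
        ≤ C / euclNorm p ^ 4)
    (Δh : Fin 3 → Fin 3 → (Fin 3 → ℝ) → ℝ)
    (hΔh : ∀ i j p, Δh i j p =
      (if i = 2 then (1 : ℝ) else 0) * (if j = 2 then (1 : ℝ) else 0) * u p)
    (W : Fin 3 → (Fin 3 → ℝ) → Fin 3 → ℝ)
    (hW : ∀ l p j, W l p j =
      p l * ((∑ k : Fin 3, fderiv ℝ (Δh k j) p (Pi.single k 1)) -
              fderiv ℝ (fun q => ∑ k : Fin 3, Δh k k q) p (Pi.single j 1)) -
      (Δh l j p - (∑ k : Fin 3, Δh k k p) * (if l = j then (1 : ℝ) else 0))) :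
    ∀ l : Fin 3,
      Tendsto (fun A => (1 / (16 * Real.pi)) * cubeFlux (W l) A) atTop (nhds 0) := by
  intro l
  have hdu : Differentiable ℝ u := hu.differentiable one_ne_zero
  set Du : (Fin 3 → ℝ) → Fin 3 → ℝ := fun p i => fderiv ℝ u p (Pi.single i 1) with hDu
  have htr : (fun q => ∑ k : Fin 3, Δh k k q) = u := by
    funext q
    simp [hΔh, Fin.sum_univ_three]
  have hfd : ∀ (k j : Fin 3) (p : Fin 3 → ℝ), fderiv ℝ (Δh k j) p =
      ((if k = 2 then (1:ℝ) else 0) * (if j = 2 then (1:ℝ) else 0)) • fderiv ℝ u p := by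
    intro k j p
    have hfun : Δh k j = fun q =>
        ((if k = 2 then (1:ℝ) else 0) * (if j = 2 then (1:ℝ) else 0)) * u q := by
      funext q; rw [hΔh]
    rw [hfun, fderiv_const_mul (hdu p)]
  -- explicit formula for W on the two relevant components
  have hWj : ∀ j : Fin 3, j ≠ 2 → ∀ p, W l p j =
      -(p l * Du p j) + u p * (if l = j then 1 else 0) := by
    intro j hj p
    rw [hW, htr]
    simp only [hfd, hΔh, ContinuousLinearMap.coe_smul', Pi.smul_apply, smul_eq_mul,
      Fin.sum_univ_three, if_neg hj, hDu]
    simp only [show ((0 : Fin 3) = 2) = False by simp, show ((1 : Fin 3) = 2) = False by simp,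
      show ((2 : Fin 3) = 2) = True by simp, if_true, if_false]
    ring
  have hW2 : ∀ p, W l p 2 = 0 := by
    intro p
    rw [hW, htr]
    simp only [hfd, hΔh, ContinuousLinearMap.coe_smul', Pi.smul_apply, smul_eq_mul,
      Fin.sum_univ_three, hDu]
    simp only [show ((0 : Fin 3) = 2) = False by simp, show ((1 : Fin 3) = 2) = False by simp,
      show ((2 : Fin 3) = 2) = True by simp, if_true, if_false]
    ring
  -- continuity
  have hDucont : ∀ j : Fin 3, Continuous fun p => Du p j := fun j =>
    (hu.continuous_fderiv one_ne_zero).clm_apply continuous_const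
  have hWcont : ∀ j : Fin 3, Continuous fun p => W l p j := by
    intro j
    by_cases hj : j = 2
    · subst hj; simp only [hW2]; exact continuous_const
    · simp only [hWj j hj]
      exact (((continuous_apply l).mul (hDucont j)).neg).add (hu.continuous.mul continuous_const)
  -- the key odd-part bound
  have key : ∀ j : Fin 3, j ≠ 2 → ∀ A : ℝ, R₀ ≤ A → ∀ p : Fin 3 → ℝ,
      A ≤ euclNorm p → |W l p j - W l (-p) j| ≤ 2 * C / A ^ 3 := by
    intro j hj A hA p hp
    have hRp : R₀ ≤ euclNorm p := hA.trans hp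
    have h0p : 0 < euclNorm p := lt_of_lt_of_le hR₀ hRp
    have hA0 : 0 < A := lt_of_lt_of_le hR₀ hA
    rw [hWj j hj, hWj j hj]
    have hnegl : (-p) l = -(p l) := rfl
    have e : (-(p l * Du p j) + u p * (if l = j then (1:ℝ) else 0))
        - (-((-p) l * Du (-p) j) + u (-p) * (if l = j then (1:ℝ) else 0))
        = -(p l * (Du p j + Du (-p) j)) + (u p - u (-p)) * (if l = j then (1:ℝ) else 0) := by
      rw [hnegl]; ring
    rw [e]
    have h1 : |-(p l * (Du p j + Du (-p) j))| ≤ euclNorm p * (C / euclNorm p ^ 4) := by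
      rw [abs_neg, abs_mul]
      have hb : |Du p j + Du (-p) j| ≤ C / euclNorm p ^ 4 :=
        (abs_le_euclNorm (fun i => Du p i + Du (-p) i) j).trans (hgradparity p hRp)
      exact mul_le_mul (abs_le_euclNorm p l) hb (abs_nonneg _) h0p.le
    have h2 : |(u p - u (-p)) * (if l = j then (1:ℝ) else 0)| ≤ C / euclNorm p ^ 3 := by
      rw [abs_mul]
      have hδ : |(if l = j then (1:ℝ) else 0)| ≤ 1 := by split <;> simp
      calc |u p - u (-p)| * |(if l = j then (1:ℝ) else 0)|
          ≤ (C / euclNorm p ^ 3) * 1 :=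
            mul_le_mul (huparity p hRp) hδ (abs_nonneg _) (by positivity)
        _ = C / euclNorm p ^ 3 := mul_one _
    calc |-(p l * (Du p j + Du (-p) j)) + (u p - u (-p)) * (if l = j then (1:ℝ) else 0)|
        ≤ |-(p l * (Du p j + Du (-p) j))|
          + |(u p - u (-p)) * (if l = j then (1:ℝ) else 0)| := abs_add_le _ _
      _ ≤ euclNorm p * (C / euclNorm p ^ 4) + C / euclNorm p ^ 3 := add_le_add h1 h2
      _ = 2 * C / euclNorm p ^ 3 := by field_simp; ring
      _ ≤ 2 * C / A ^ 3 := by gcongr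
  -- bound on the flux
  have bound : ∀ A : ℝ, R₀ ≤ A → 0 < A → |cubeFlux (W l) A| ≤ 16 * C / A := by
    intro A hA hA0
    have hAne : A ≠ 0 := ne_of_gt hA0
    have h3 : (∫ x in (-A)..A, ∫ y in (-A)..A, (W l ![x, y, A] 2 - W l ![x, y, -A] 2)) = 0 := by
      simp [hW2]
    have hf1 : Continuous fun q : ℝ × ℝ => W l ![A, q.1, q.2] 0 :=
      (hWcont 0).comp (cont_vec3 continuous_const continuous_fst continuous_snd)
    have hg1 : Continuous fun q : ℝ × ℝ => W l ![-A, q.1, q.2] 0 :=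
      (hWcont 0).comp (cont_vec3 continuous_const continuous_fst continuous_snd)
    have hf2 : Continuous fun q : ℝ × ℝ => W l ![q.1, A, q.2] 1 :=
      (hWcont 1).comp (cont_vec3 continuous_fst continuous_const continuous_snd)
    have hg2 : Continuous fun q : ℝ × ℝ => W l ![q.1, -A, q.2] 1 :=
      (hWcont 1).comp (cont_vec3 continuous_fst continuous_const continuous_snd)
    have hb1 : ∀ y z : ℝ, |W l ![A, y, z] 0 - W l ![-A, -y, -z] 0| ≤ 2 * C / A ^ 3 := by
      intro y z
      have hneg : (![-A, -y, -z] : Fin 3 → ℝ) = -![A, y, z] := by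
        funext i; fin_cases i <;> simp
      rw [hneg]
      apply key 0 (by decide) A hA
      have := abs_le_euclNorm ![A, y, z] 0
      simpa [abs_of_pos hA0] using this
    have hb2 : ∀ x z : ℝ, |W l ![x, A, z] 1 - W l ![-x, -A, -z] 1| ≤ 2 * C / A ^ 3 := by
      intro x z
      have hneg : (![-x, -A, -z] : Fin 3 → ℝ) = -![x, A, z] := by
        funext i; fin_cases i <;> simp
      rw [hneg]
      apply key 1 (by decide) A hA
      have := abs_le_euclNorm ![x, A, z] 1
      simpa [abs_of_pos hA0] using this
    have t1 : |∫ y in (-A)..A, ∫ z in (-A)..A, (W l ![A, y, z] 0 - W l ![-A, y, z] 0)|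
        ≤ 2 * C / A ^ 3 * (2 * A) * (2 * A) :=
      flux_pair_bound hf1 hg1 hA0 hb1
    have t2 : |∫ x in (-A)..A, ∫ z in (-A)..A, (W l ![x, A, z] 1 - W l ![x, -A, z] 1)|
        ≤ 2 * C / A ^ 3 * (2 * A) * (2 * A) :=
      flux_pair_bound hf2 hg2 hA0 hb2
    have hval : 2 * C / A ^ 3 * (2 * A) * (2 * A) = 8 * C / A := by
      field_simp; ring
    rw [hval] at t1 t2
    unfold cubeFlux
    rw [h3, add_zero]
    calc |(∫ y in (-A)..A, ∫ z in (-A)..A, (W l ![A, y, z] 0 - W l ![-A, y, z] 0))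
          + ∫ x in (-A)..A, ∫ z in (-A)..A, (W l ![x, A, z] 1 - W l ![x, -A, z] 1)|
        ≤ |∫ y in (-A)..A, ∫ z in (-A)..A, (W l ![A, y, z] 0 - W l ![-A, y, z] 0)|
          + |∫ x in (-A)..A, ∫ z in (-A)..A, (W l ![x, A, z] 1 - W l ![x, -A, z] 1)| :=
          abs_add_le _ _
      _ ≤ 8 * C / A + 8 * C / A := add_le_add t1 t2
      _ = 16 * C / A := by ring
  -- conclude
  have hπ : (0:ℝ) ≤ 1 / (16 * Real.pi) := by positivity
  have htend : Tendsto (fun A : ℝ => 1 / (16 * Real.pi) * (16 * C / A)) atTop (nhds 0) := by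
    have h := Filter.Tendsto.div_atTop
      (tendsto_const_nhds (x := 1 / (16 * Real.pi) * (16 * C)) (f := atTop)) tendsto_id
    simpa [mul_div_assoc] using h
  apply squeeze_zero_norm' ?_ htend
  filter_upwards [eventually_ge_atTop (max R₀ 1)] with A hA
  have hA0 : (0:ℝ) < A := lt_of_lt_of_le one_pos (le_trans (le_max_right _ _) hA)
  have hAR : R₀ ≤ A := le_trans (le_max_left _ _) hA
  rw [Real.norm_eq_abs, abs_mul, abs_of_nonneg hπ]
  exact mul_le_mul_of_nonneg_left (bound A hAR hA0) hπ
end
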